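/- For every β ∈ (0,1) there exists n₀ ∈ ℕ such that for all n ≥ n₀ the following holds. Suppose a one-message shuffled protocol P = (R, A) on data universe 𝒳 with message space 𝒴 is (ε_S, δ_S)-differentially private in the shuffled model with ε_S ≤ 1 and δ_S < n^{−8}, and is (α,β)-accurate for a function f : 𝒳^n → 𝒵 with respect to a distance function d : 𝒵 × 𝒵 → ℝ. Then there exists a local protocol P_L = (R', A') on 𝒳 that is (8(ε_S + ln n), 0)-differentially private in the local model and is (α, 4β)-accurate for f with respect to d. -/

import Mathlib

open scoped ENNReal Classical

noncomputable section

namespace ShuffledDP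

universe u v w

lemma half_le_one : (2⁻¹ : ℝ≥0∞) ≤ 1 := by
  simp [ENNReal.inv_le_one]

/-- Independent samples from a finite family of PMFs, collected (in order) as a list. -/
noncomputable def indep {α : Type u} : (n : ℕ) → (Fin n → PMF α) → PMF (List α)
  | 0, _ => PMF.pure []
  | n + 1, f =>
      (f 0).bind fun y => (indep n fun i => f i.succ).bind fun ys => PMF.pure (y :: ys)

/-- `(ε, δ)`-differential privacy of a mechanism `M` with respect to a
neighboring relation `nbr` on inputs. -/
def DPFor {I : Type u} {Z : Type v} (nbr : I → I → Prop) (M : I → PMF Z) (ε δ : ℝ) : Prop :=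
  ∀ x x', nbr x x' → ∀ T : Set Z,
    (M x).toOuterMeasure T ≤
      ENNReal.ofReal (Real.exp ε) * (M x').toOuterMeasure T + ENNReal.ofReal δ

/-- Two datasets are neighbors if they differ in at most one coordinate. -/
def Neighbor {n : ℕ} {X : Type u} (x x' : Fin n → X) : Prop :=
  ∃ j, ∀ i, i ≠ j → x i = x' i

/-- The randomized-response local randomizer `R_{n,λ}`: output the input bit with
probability `1 - λ/n` and a uniformly random bit with probability `λ/n`. -/
noncomputable def rr (n : ℕ) (lam : ℝ) (x : Bool) : PMF Bool :=
  (PMF.bernoulli (min (Real.toNNReal (lam / n)) 1) (min_le_right _ _)).bind fun b =>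
    if b then PMF.bernoulli 2⁻¹ (inv_le_one_of_one_le₀ one_le_two) else PMF.pure x

/-- Binomial distribution, valued in `ℕ`. -/
noncomputable def binom (p : ℝ≥0∞) (h : p ≤ 1) (m : ℕ) : PMF ℕ :=
  (PMF.binomial p.toNNReal (by simpa using ENNReal.toNNReal_mono ENNReal.one_ne_top h) m).map Fin.val

/-- Uniform distribution over the subsets of `Fin n` of size `s`. -/
noncomputable def uniformSubset (n s : ℕ) : PMF (Finset (Fin n)) :=
  if h : ((Finset.univ : Finset (Fin n)).powersetCard s).Nonempty then
    PMF.uniformOfFinset _ h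
  else PMF.pure ∅

/-- `∑_{i ∉ H} x_i` for a boolean dataset `x`. -/
def sumOutside {n : ℕ} (H : Finset (Fin n)) (x : Fin n → Bool) : ℕ :=
  ∑ i ∈ Hᶜ, (if x i then 1 else 0)

/-- The mechanism `C_H`: output `∑_{i ∉ H} x_i + B` with `B ~ Bin(|H|, 1/2)`. -/
noncomputable def CH (n : ℕ) (H : Finset (Fin n)) (x : Fin n → Bool) : PMF ℕ :=
  (binom 2⁻¹ half_le_one H.card).map fun B => sumOutside H x + B

/-- The mechanism `C_s`: sample `H` uniformly among size-`s` subsets, then run `C_H`. -/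
noncomputable def Cs (n s : ℕ) (x : Fin n → Bool) : PMF ℕ :=
  (uniformSubset n s).bind fun H => CH n H x

/-- The mechanism `C_λ`: sample `s ~ Bin(n, λ/n)`, then run `C_s`. -/
noncomputable def Cmech (n : ℕ) (lam : ℝ) (x : Fin n → Bool) : PMF ℕ :=
  (binom (min (ENNReal.ofReal (lam / n)) 1) (min_le_right _ _) n).bind fun s => Cs n s x

/-- The shuffled bit-sum mechanism `Π_{n,λ}`: the random multiset `{y_1, …, y_n}`
of the outputs `y_i ~ R_{n,λ}(x_i)`. -/
noncomputable def shuffleBit (n : ℕ) (lam : ℝ) (x : Fin n → Bool) : PMF (Multiset Bool) :=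
  (indep n fun i => rr n lam (x i)).map fun l => (l : Multiset Bool)

/-- The bit-sum protocol output `P_{n,λ}(x) = (n/(n-λ)) (∑ y_i - λ/2)`. -/
noncomputable def bitSumOutput (n : ℕ) (lam : ℝ) (x : Fin n → Bool) : PMF ℝ :=
  (indep n fun i => rr n lam (x i)).map fun l =>
    ((n : ℝ) / (n - lam)) * ((l.count true : ℝ) - lam / 2)

/-- The randomized-rounding encoder `E_r`. -/
noncomputable def encoder (r : ℕ) (x : ℝ) : PMF (Fin r → Bool) :=
  (PMF.bernoulli (min (Real.toNNReal (x * r - ⌈x * r⌉ + 1)) 1) (min_le_right _ _)).map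
    fun b i => if ((i : ℕ) : ℤ) + 1 < ⌈x * r⌉ then true
      else if ((i : ℕ) : ℤ) + 1 = ⌈x * r⌉ then b else false

/-- The real-sum shuffled mechanism `Π^ℝ_{n,λ,r}`: the random multiset of all `n·r`
bits `y_{i,j} ~ R_{n,λ}(b_{i,j})` where `(b_{i,1},…,b_{i,r}) = E_r(x_i)`. -/
noncomputable def realShuffle (n : ℕ) (lam : ℝ) (r : ℕ) (X : Fin n → ℝ) :
    PMF (Multiset Bool) :=
  (indep n fun i =>
      (encoder r (X i)).bind fun b =>
        (indep r fun j => rr n lam (b j)).map fun l => (l : Multiset Bool)).map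
    fun ms => ms.sum

/-- The real-sum protocol output `z = (1/r)(n/(n-λ)) (∑_{i,j} y_{i,j} - λ r/2)`. -/
noncomputable def realOutput (n : ℕ) (lam : ℝ) (r : ℕ) (X : Fin n → ℝ) : PMF ℝ :=
  (realShuffle n lam r X).map fun m =>
    (1 / (r : ℝ)) * ((n : ℝ) / (n - lam)) * ((m.count true : ℝ) - lam * r / 2)

/-- The shuffled mechanism associated with a randomizer producing a multiset of
messages: the union (multiset sum) of the `n` users' message multisets. -/
noncomputable def shuffM {𝒳 : Type u} {𝒴 : Type v} (n : ℕ) (R : 𝒳 → PMF (Multiset 𝒴))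
    (x : Fin n → 𝒳) : PMF (Multiset 𝒴) :=
  (indep n fun i => R (x i)).map fun l => l.sum

/-- The multiset of the `m` messages output by an `m`-message randomizer. -/
noncomputable def vecR {𝒳 : Type u} {𝒴 : Type v} {m : ℕ} (R : 𝒳 → PMF (Fin m → 𝒴)) :
    𝒳 → PMF (Multiset 𝒴) :=
  fun a => (R a).map fun v => ((List.ofFn v : List 𝒴) : Multiset 𝒴)

/-- The one-message shuffled mechanism `Π_R`: the random multiset `{R(x_1), …, R(x_n)}`. -/
noncomputable def shuffle1 {𝒳 : Type u} {𝒴 : Type v} (n : ℕ) (R : 𝒳 → PMF 𝒴)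
    (x : Fin n → 𝒳) : PMF (Multiset 𝒴) :=
  (indep n fun i => R (x i)).map fun l => (l : Multiset 𝒴)

/-- `(ε, δ)`-differential privacy of a local randomizer (any two inputs are neighbors). -/
def RandDP {𝒳 : Type u} {𝒴 : Type v} (R : 𝒳 → PMF 𝒴) (ε δ : ℝ) : Prop :=
  ∀ x x' : 𝒳, ∀ T : Set 𝒴,
    (R x).toOuterMeasure T ≤
      ENNReal.ofReal (Real.exp ε) * (R x').toOuterMeasure T + ENNReal.ofReal δ

/-- The output of the local protocol `(R, A)`. -/
noncomputable def localOut {𝒳 : Type u} {𝒴 : Type v} {𝒵 : Type w} (n : ℕ)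
    (R : 𝒳 → PMF 𝒴) (A : List 𝒴 → 𝒵) (X : Fin n → 𝒳) : PMF 𝒵 :=
  (indep n fun i => R (X i)).map A

/-- `(a, b)`-accuracy of a protocol `P` for a function `f` w.r.t. a distance `d`. -/
def AccFor {I : Type u} {𝒵 : Type w} (P : I → PMF 𝒵) (f : I → 𝒵) (d : 𝒵 → 𝒵 → ℝ)
    (a b : ℝ) : Prop :=
  ∀ X, ENNReal.ofReal (1 - b) ≤ (P X).toOuterMeasure {z | d z (f X) ≤ a}


lemma meas_le_one {α : Type u} (p : PMF α) (s : Set α) : p.toOuterMeasure s ≤ 1 := by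
  rw [PMF.toOuterMeasure_apply]
  calc ∑' x, s.indicator (⇑p) x ≤ ∑' x, p x :=
        ENNReal.tsum_le_tsum fun x => Set.indicator_le_self _ _ _
    _ = 1 := p.tsum_coe

lemma meas_univ {α : Type u} (p : PMF α) : p.toOuterMeasure Set.univ = 1 := by
  rw [PMF.toOuterMeasure_apply]
  simpa using p.tsum_coe

lemma meas_eq_tsum_ite {α : Type u} (p : PMF α) (s : Set α) [∀ y, Decidable (y ∈ s)] :
    p.toOuterMeasure s = ∑' y, (if y ∈ s then p y else 0) := by
  rw [PMF.toOuterMeasure_apply]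
  refine tsum_congr fun y => ?_
  rw [Set.indicator_apply]

lemma exp_close {α : Type u} (μ ν : PMF α) (η : ℝ≥0∞)
    (h : ∀ T : Set α, μ.toOuterMeasure T ≤ ν.toOuterMeasure T + η)
    (g : α → ℝ≥0∞) (hg : ∀ y, g y ≤ 1) :
    ∑' y, μ y * g y ≤ (∑' y, ν y * g y) + η := by
  classical
  set B : Set α := {y | ν y < μ y} with hB
  have hsplit : ∀ y, μ y * g y ≤ ν y * g y + Set.indicator B (fun y => μ y - ν y) y := by
    intro y
    by_cases hy : y ∈ B
    · rw [Set.indicator_of_mem hy]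
      have hle : ν y ≤ μ y := le_of_lt hy
      have hdec : μ y = ν y + (μ y - ν y) := (add_tsub_cancel_of_le hle).symm
      calc μ y * g y = ν y * g y + (μ y - ν y) * g y := by rw [← add_mul, ← hdec]
        _ ≤ ν y * g y + (μ y - ν y) := by
            gcongr
            calc (μ y - ν y) * g y ≤ (μ y - ν y) * 1 := mul_le_mul_right (hg y) _
              _ = μ y - ν y := mul_one _
    · rw [Set.indicator_of_notMem hy]
      have : μ y ≤ ν y := not_lt.mp hy
      simpa using mul_le_mul_left this (g y)
  have hsum : ∑' y, Set.indicator B (fun y => μ y - ν y) y ≤ η := by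
    have h1 := h B
    have h2 : μ.toOuterMeasure B
        = ν.toOuterMeasure B + ∑' y, Set.indicator B (fun y => μ y - ν y) y := by
      rw [PMF.toOuterMeasure_apply, PMF.toOuterMeasure_apply, ← ENNReal.tsum_add]
      refine tsum_congr fun y => ?_
      by_cases hy : y ∈ B
      · simp only [Set.indicator_of_mem hy]
        exact (add_tsub_cancel_of_le (le_of_lt hy)).symm
      · simp [Set.indicator_of_notMem hy]
    rw [h2] at h1
    exact ENNReal.le_of_add_le_add_left
      (lt_of_le_of_lt (meas_le_one ν B) ENNReal.one_lt_top).ne h1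
  calc ∑' y, μ y * g y
      ≤ ∑' y, (ν y * g y + Set.indicator B (fun y => μ y - ν y) y) :=
        ENNReal.tsum_le_tsum hsplit
    _ = (∑' y, ν y * g y) + ∑' y, Set.indicator B (fun y => μ y - ν y) y := ENNReal.tsum_add
    _ ≤ _ := by gcongr

lemma indep_succ_meas {α : Type u} {n : ℕ} (f : Fin (n+1) → PMF α) (S : Set (List α)) :
    (indep (n+1) f).toOuterMeasure S
      = ∑' y, f 0 y * (indep n fun i => f i.succ).toOuterMeasure {l | y :: l ∈ S} := by
  rw [indep, PMF.toOuterMeasure_bind_apply]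
  refine tsum_congr fun y => ?_
  congr 1
  rw [PMF.toOuterMeasure_bind_apply, PMF.toOuterMeasure_apply]
  refine tsum_congr fun l => ?_
  rw [PMF.toOuterMeasure_pure_apply, Set.indicator_apply]
  by_cases hl : y :: l ∈ S <;> simp [hl, Set.mem_setOf_eq]

lemma indep_close {α : Type u} : ∀ (n : ℕ) (f g : Fin n → PMF α) (η : ℝ≥0∞),
    (∀ i (T : Set α), (f i).toOuterMeasure T ≤ (g i).toOuterMeasure T + η) →
    ∀ S : Set (List α),
      (indep n f).toOuterMeasure S ≤ (indep n g).toOuterMeasure S + n * η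
  | 0, f, g, η, _, S => by simp [indep]
  | n+1, f, g, η, h, S => by
    rw [indep_succ_meas, indep_succ_meas]
    have IH := indep_close n (fun i => f i.succ) (fun i => g i.succ) η
      (fun i T => h i.succ T)
    set Q : α → ℝ≥0∞ := fun y => (indep n fun i => g i.succ).toOuterMeasure {l | y :: l ∈ S}
      with hQ
    set G : α → ℝ≥0∞ := fun y => min (Q y + n * η) 1 with hG
    have h1 : ∑' y, f 0 y * (indep n fun i => f i.succ).toOuterMeasure {l | y :: l ∈ S}
        ≤ ∑' y, f 0 y * G y := by
      refine ENNReal.tsum_le_tsum fun y => mul_le_mul_right (le_min (IH _) (meas_le_one _ _)) _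
    have h2 : ∑' y, f 0 y * G y ≤ (∑' y, g 0 y * G y) + η :=
      exp_close _ _ η (h 0) G (fun y => min_le_right _ _)
    have h3 : ∑' y, g 0 y * G y ≤ (∑' y, g 0 y * Q y) + n * η := by
      calc ∑' y, g 0 y * G y ≤ ∑' y, (g 0 y * Q y + g 0 y * (n * η)) := by
            refine ENNReal.tsum_le_tsum fun y => ?_
            rw [← mul_add]
            exact mul_le_mul_right (min_le_left _ _) _
        _ = (∑' y, g 0 y * Q y) + ∑' y, g 0 y * (n * η) := ENNReal.tsum_add
        _ ≤ (∑' y, g 0 y * Q y) + n * η := by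
            gcongr
            rw [ENNReal.tsum_mul_right, PMF.tsum_coe, one_mul]
    calc ∑' y, f 0 y * (indep n fun i => f i.succ).toOuterMeasure {l | y :: l ∈ S}
        ≤ (∑' y, g 0 y * Q y) + n * η + η := le_trans h1 (le_trans h2 (by gcongr))
      _ = (∑' y, g 0 y * Q y) + (n+1 : ℕ) * η := by push_cast; ring

lemma indep_union_bound {α : Type u} : ∀ (n : ℕ) (f : Fin n → PMF α) (T : Set α) (q : ℝ≥0∞),
    (∀ i, (f i).toOuterMeasure T ≤ q) →
    (indep n f).toOuterMeasure {l | ∃ y ∈ l, y ∈ T} ≤ n * q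
  | 0, f, T, q, _ => by
    simp [indep, PMF.toOuterMeasure_pure_apply]
  | n+1, f, T, q, h => by
    rw [indep_succ_meas]
    have hb : ∀ y, (indep n fun i => f i.succ).toOuterMeasure {l | ∃ z ∈ y :: l, z ∈ T}
        ≤ (if y ∈ T then 1 else 0) + n * q := by
      intro y
      by_cases hy : y ∈ T
      · simp only [hy, if_true]
        exact le_add_right (meas_le_one _ _)
      · have hset : {l : List α | ∃ z ∈ y :: l, z ∈ T} = {l | ∃ z ∈ l, z ∈ T} := by
          ext l; simp only [Set.mem_setOf_eq, List.mem_cons]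
          constructor
          · rintro ⟨z, hz | hz, hzT⟩
            · exact absurd (hz ▸ hzT) hy
            · exact ⟨z, hz, hzT⟩
          · rintro ⟨z, hz, hzT⟩; exact ⟨z, Or.inr hz, hzT⟩
        rw [hset, if_neg hy, zero_add]
        exact indep_union_bound n _ T q (fun i => h i.succ)
    calc ∑' y, f 0 y * (indep n fun i => f i.succ).toOuterMeasure {l | ∃ z ∈ y :: l, z ∈ T}
        ≤ ∑' y, (f 0 y * (if y ∈ T then 1 else 0) + f 0 y * (n * q)) := by
          refine ENNReal.tsum_le_tsum fun y => ?_
          rw [← mul_add]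
          exact mul_le_mul_right (hb y) _
      _ = (∑' y, f 0 y * (if y ∈ T then 1 else 0)) + ∑' y, f 0 y * (n * q) :=
          ENNReal.tsum_add
      _ ≤ q + n * q := by
          gcongr
          · calc (∑' y, f 0 y * (if y ∈ T then 1 else 0))
                = (f 0).toOuterMeasure T := by
                  rw [meas_eq_tsum_ite]
                  refine tsum_congr fun y => ?_
                  by_cases hy : y ∈ T <;> simp [hy]
              _ ≤ q := h 0
          · rw [ENNReal.tsum_mul_right, PMF.tsum_coe, one_mul]
      _ = (n+1 : ℕ) * q := by push_cast; ring

lemma indep_head_bound {α : Type u} (n : ℕ) (f : Fin (n+1) → PMF α) (T : Set α) :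
    (f 0).toOuterMeasure T ≤ (indep (n+1) f).toOuterMeasure {l | ∃ y ∈ l, y ∈ T} := by
  rw [indep_succ_meas, meas_eq_tsum_ite]
  refine ENNReal.tsum_le_tsum fun y => ?_
  by_cases hy : y ∈ T
  · have huniv : {l : List α | y :: l ∈ {l | ∃ y ∈ l, y ∈ T}} = Set.univ := by
      ext l; simp only [Set.mem_setOf_eq, Set.mem_univ, iff_true]
      exact ⟨y, List.mem_cons_self, hy⟩
    rw [if_pos hy, huniv, meas_univ, mul_one]
  · simp [hy]

lemma shuffle1_meas {𝒳 : Type u} {𝒴 : Type v} (n : ℕ) (R : 𝒳 → PMF 𝒴) (Z : Fin n → 𝒳)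
    (S : Set (Multiset 𝒴)) :
    (shuffle1 n R Z).toOuterMeasure S
      = (indep n fun i => R (Z i)).toOuterMeasure {l | (l : Multiset 𝒴) ∈ S} := by
  unfold shuffle1
  rw [PMF.toOuterMeasure_map_apply]
  show ((indep n fun i => R (Z i)).bind fun l => PMF.pure (l : Multiset 𝒴)).toOuterMeasure _ = _
  rw [PMF.toOuterMeasure_bind_apply, meas_eq_tsum_ite]
  refine tsum_congr fun l => ?_
  rw [PMF.toOuterMeasure_pure_apply]
  by_cases h : (l : Multiset 𝒴) ∈ S <;> simp [h, Set.mem_preimage]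

lemma local_dp {𝒳 : Type u} {𝒴 : Type v} (n : ℕ) (hn : 1 ≤ n) (R : 𝒳 → PMF 𝒴)
    (epsS delS : ℝ) (hDP : DPFor Neighbor (shuffle1 n R) epsS delS) (x x' : 𝒳) (T : Set 𝒴) :
    (R x).toOuterMeasure T
      ≤ ENNReal.ofReal (Real.exp epsS) * ((n : ℝ≥0∞) * (R x').toOuterMeasure T)
        + ENNReal.ofReal delS := by
  obtain ⟨m, rfl⟩ : ∃ m, n = m + 1 := ⟨n - 1, (Nat.succ_pred_eq_of_pos hn).symm⟩
  set X : Fin (m+1) → 𝒳 := fun i => if i = 0 then x else x' with hX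
  set X' : Fin (m+1) → 𝒳 := fun _ => x' with hX'
  set E : Set (Multiset 𝒴) := {ms | ∃ y ∈ ms, y ∈ T} with hE
  have hpre : ∀ Z : Fin (m+1) → 𝒳,
      (shuffle1 (m+1) R Z).toOuterMeasure E
        = (indep (m+1) fun i => R (Z i)).toOuterMeasure {l | ∃ y ∈ l, y ∈ T} := by
    intro Z
    rw [shuffle1_meas]
    refine congrArg _ ?_
    ext l
    simp [hE, Set.mem_setOf_eq, Multiset.mem_coe]
  have h1 : (R x).toOuterMeasure T ≤ (shuffle1 (m+1) R X).toOuterMeasure E := by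
    rw [hpre]
    have := indep_head_bound m (fun i => R (X i)) T
    simpa [hX] using this
  have h2 : (shuffle1 (m+1) R X').toOuterMeasure E ≤ (m+1 : ℕ) * (R x').toOuterMeasure T := by
    rw [hpre]
    exact indep_union_bound (m+1) _ T _ (fun i => le_refl _)
  have hnbr : Neighbor X X' := ⟨0, fun i hi => by simp [hX, hX', hi]⟩
  calc (R x).toOuterMeasure T ≤ (shuffle1 (m+1) R X).toOuterMeasure E := h1
    _ ≤ ENNReal.ofReal (Real.exp epsS) * (shuffle1 (m+1) R X').toOuterMeasure E
        + ENNReal.ofReal delS := hDP X X' hnbr E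
    _ ≤ ENNReal.ofReal (Real.exp epsS) * ((m+1 : ℕ) * (R x').toOuterMeasure T)
        + ENNReal.ofReal delS := by gcongr


/-- shuffled-to-local transformation: for every `β ∈ (0,1)` there
is `n₀` such that for all `n ≥ n₀`: any one-message shuffled protocol `(R, A)`
that is `(ε_S, δ_S)`-DP in the shuffled model with `ε_S ≤ 1`, `δ_S < n^{-8}`, and
`(α,β)`-accurate for `f` w.r.t. `d`, yields a local protocol `(R', A')` that is
`(8(ε_S + ln n), 0)`-DP in the local model and `(α, 4β)`-accurate for `f`. -/
theorem stmt17 :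
    ∀ beta : ℝ, beta ∈ Set.Ioo (0 : ℝ) 1 → ∃ n₀ : ℕ, ∀ n : ℕ, n₀ ≤ n →
      ∀ (𝒳 : Type u) (𝒴 : Type v) (𝒵 : Type w) (R : 𝒳 → PMF 𝒴)
        (A : Multiset 𝒴 → 𝒵) (f : (Fin n → 𝒳) → 𝒵) (d : 𝒵 → 𝒵 → ℝ)
        (epsS delS alpha : ℝ),
        epsS ≤ 1 → delS < (n : ℝ) ^ (-8 : ℤ) →
        DPFor Neighbor (shuffle1 n R) epsS delS →
        AccFor (fun X : Fin n → 𝒳 => (shuffle1 n R X).map A) f d alpha beta →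
        ∃ (R' : 𝒳 → PMF 𝒴) (A' : List 𝒴 → 𝒵),
          RandDP R' (8 * (epsS + Real.log n)) 0 ∧
          AccFor (localOut n R' A') f d alpha (4 * beta) := by
  rintro beta ⟨hb0, hb1⟩
  refine ⟨⌈(2048:ℝ)/beta⌉₊ + 2, ?_⟩
  intro n hn 𝒳 𝒴 𝒵 R A f d epsS delS alpha heps hdel hDP hAcc
  have hn2 : 2 ≤ n := le_trans (by omega) hn
  have hn1 : 1 ≤ n := by omega
  have hnR2 : (2:ℝ) ≤ (n:ℝ) := by exact_mod_cast hn2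
  have hnR0 : (0:ℝ) < (n:ℝ) := by linarith
  have hnR : (2048:ℝ)/beta ≤ (n:ℝ) := by
    refine le_trans (Nat.le_ceil _) ?_
    exact_mod_cast Nat.le_of_add_right_le hn
  have h2048 : (2048:ℝ) ≤ (n:ℝ) * beta := by
    rw [div_le_iff₀ hb0] at hnR
    linarith
  -- convert the δ bound
  have hzpow : (n:ℝ) ^ (-8 : ℤ) = (((n:ℝ)^8)⁻¹ : ℝ) := by
    rw [zpow_neg]
    norm_cast
  have hdel' : delS ≤ (((n:ℝ)^8)⁻¹ : ℝ) := by rw [hzpow] at hdel; linarith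
  by_cases hXne : Nonempty 𝒳
  case neg =>
    have hEmp : IsEmpty 𝒳 := not_nonempty_iff.mp hXne
    refine ⟨fun x => (hEmp.elim x : PMF 𝒴), fun _ => A 0, ?_, ?_⟩
    · intro x x' T
      exact hEmp.elim x
    · intro X
      exact hEmp.elim (X ⟨0, by omega⟩)
  obtain ⟨xs⟩ := hXne
  set E : ℝ := Real.exp epsS with hEdef
  have hE0 : 0 < E := Real.exp_pos _
  have hE3 : E ≤ 3 := by
    calc E ≤ Real.exp 1 := Real.exp_le_exp.mpr heps
      _ ≤ 3 := by linarith [Real.exp_one_lt_d9]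
  -- lower bound on E
  have hEhalf : (1:ℝ)/2 ≤ E := by
    have h := hDP (fun _ => xs) (fun _ => xs)
      ⟨⟨0, by omega⟩, fun _ _ => rfl⟩ Set.univ
    rw [meas_univ, mul_one] at h
    have h2 : (1 : ℝ≥0∞) ≤ ENNReal.ofReal (E + ((n:ℝ)^8)⁻¹) := by
      refine le_trans h ?_
      rw [ENNReal.ofReal_add (le_of_lt hE0) (by positivity)]
      gcongr
    rw [ENNReal.one_le_ofReal] at h2
    have h8 : (2:ℝ) ≤ (n:ℝ)^8 :=
      le_trans hnR2 (le_self_pow₀ (by linarith) (by norm_num))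
    have hinv : ((n:ℝ)^8)⁻¹ ≤ 1/2 := by
      calc ((n:ℝ)^8)⁻¹ ≤ (2:ℝ)⁻¹ := by gcongr
        _ = 1/2 := by norm_num
    linarith
  set dhat : ℝ≥0∞ := ENNReal.ofReal delS with hdhat
  set c : ℝ≥0∞ := ENNReal.ofReal ((n:ℝ) * E) with hcdef
  have hc_top : c ≠ ⊤ := ENNReal.ofReal_ne_top
  have hcid : ∀ m : ℝ≥0∞, ENNReal.ofReal E * ((n : ℝ≥0∞) * m) = c * m := by
    intro m
    rw [hcdef, ENNReal.ofReal_mul (le_of_lt hnR0), ENNReal.ofReal_natCast]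
    ring
  have hc : ∀ x x' (T : Set 𝒴),
      (R x).toOuterMeasure T ≤ c * (R x').toOuterMeasure T + dhat := by
    intro x x' T
    have h := local_dp n hn1 R epsS delS hDP x x' T
    rwa [hcid] at h
  set K : ℝ≥0∞ := ENNReal.ofReal (2 * ((n:ℝ) * E)) with hKdef
  have hK2c : K = 2 * c := by
    rw [hKdef, hcdef, ENNReal.ofReal_mul (by norm_num : (0:ℝ) ≤ 2)]
    norm_num
  set B : 𝒳 → Set 𝒴 := fun x => {y | K * (R xs) y < (R x) y} with hBdef
  have hB : ∀ x, (R x).toOuterMeasure (B x) ≤ 2 * dhat := by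
    intro x
    set Q := (R xs).toOuterMeasure (B x) with hQdef
    have hQ1 : Q ≤ 1 := meas_le_one _ _
    have hKQ : K * Q ≤ (R x).toOuterMeasure (B x) := by
      rw [hQdef, meas_eq_tsum_ite, meas_eq_tsum_ite, ← ENNReal.tsum_mul_left]
      refine ENNReal.tsum_le_tsum fun y => ?_
      by_cases hy : y ∈ B x
      · rw [if_pos hy, if_pos hy]
        exact le_of_lt hy
      · simp [hy]
    have h1 : K * Q ≤ c * Q + dhat := le_trans hKQ (hc x xs (B x))
    rw [hK2c, two_mul, add_mul] at h1
    have hcQ_top : c * Q ≠ ⊤ :=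
      ENNReal.mul_ne_top hc_top (lt_of_le_of_lt hQ1 ENNReal.one_lt_top).ne
    have h2 : c * Q ≤ dhat := ENNReal.le_of_add_le_add_left hcQ_top h1
    calc (R x).toOuterMeasure (B x) ≤ c * Q + dhat := hc x xs (B x)
      _ ≤ dhat + dhat := by gcongr
      _ = 2 * dhat := (two_mul _).symm
  set p : ℝ≥0∞ := ENNReal.ofReal (beta / (n:ℝ)) with hpdef
  have hp : p ≤ 1 := by
    rw [hpdef, ENNReal.ofReal_le_one, div_le_one hnR0]
    linarith
  have hpcoe : ((p.toNNReal : NNReal) : ℝ≥0∞) = p :=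
    ENNReal.coe_toNNReal (lt_of_le_of_lt hp ENNReal.one_lt_top).ne
  have hp' : p.toNNReal ≤ 1 := by
    have h := ENNReal.toNNReal_mono ENNReal.one_ne_top hp
    rwa [ENNReal.toNNReal_one] at h
  set R' : 𝒳 → PMF 𝒴 := fun x => (R x).bind fun y =>
    (PMF.bernoulli p.toNNReal hp').bind fun b =>
      if b = false ∧ y ∉ B x then PMF.pure y else R xs with hR'def
  set A' : List 𝒴 → 𝒵 := fun l => A (l : Multiset 𝒴) with hA'def
  -- measure formula for R'
  have hform : ∀ x (T : Set 𝒴), (R' x).toOuterMeasure T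
      = ∑' y, (R x) y * ((1 - p) * (if y ∈ B x then (R xs).toOuterMeasure T
          else (if y ∈ T then 1 else 0)) + p * (R xs).toOuterMeasure T) := by
    intro x T
    rw [hR'def]
    rw [PMF.toOuterMeasure_bind_apply]
    refine tsum_congr fun y => ?_
    congr 1
    rw [PMF.toOuterMeasure_bind_apply, tsum_bool, PMF.bernoulli_apply, PMF.bernoulli_apply]
    by_cases hy : y ∈ B x
    · simp [PMF.bernoulli_apply, hy, hpcoe, ENNReal.coe_sub]
    · simp [PMF.bernoulli_apply, hy, PMF.toOuterMeasure_pure_apply, hpcoe, ENNReal.coe_sub]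
  -- upper bound
  have hup : ∀ x (T : Set 𝒴),
      (R' x).toOuterMeasure T ≤ (K + 2) * (R xs).toOuterMeasure T := by
    intro x T
    rw [hform]
    set RT := (R xs).toOuterMeasure T with hRT
    have hRT1 : RT ≤ 1 := meas_le_one _ _
    have hpt : ∀ y, (R x) y * ((1 - p) * (if y ∈ B x then RT
          else (if y ∈ T then 1 else 0)) + p * RT)
        ≤ ((if y ∈ B x then (R x) y else 0) * RT
            + (K * (if y ∈ T then (R xs) y else 0) + (R x) y * (p * RT))) := by
      intro y
      rw [mul_add]
      by_cases hy : y ∈ B x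
      · rw [if_pos hy, if_pos hy]
        refine add_le_add ?_ (le_add_left (le_refl _))
        calc (R x) y * ((1 - p) * RT) ≤ (R x) y * (1 * RT) := by
              gcongr; exact tsub_le_self
          _ = (R x) y * RT := by rw [one_mul]
      · rw [if_neg hy, if_neg hy, zero_mul, zero_add]
        have hxy : (R x) y ≤ K * (R xs) y := not_lt.mp hy
        refine add_le_add ?_ (le_refl _)
        by_cases hT : y ∈ T
        · rw [if_pos hT, if_pos hT]
          calc (R x) y * ((1 - p) * 1) = (R x) y * (1 - p) := by rw [mul_one]
            _ ≤ (R x) y * 1 := mul_le_mul_right tsub_le_self _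
            _ = (R x) y := mul_one _
            _ ≤ K * (R xs) y := hxy
        · rw [if_neg hT, if_neg hT]
          simp
    calc ∑' y, (R x) y * ((1 - p) * (if y ∈ B x then RT
            else (if y ∈ T then 1 else 0)) + p * RT)
        ≤ ∑' y, ((if y ∈ B x then (R x) y else 0) * RT
            + (K * (if y ∈ T then (R xs) y else 0) + (R x) y * (p * RT))) :=
          ENNReal.tsum_le_tsum hpt
      _ = (∑' y, (if y ∈ B x then (R x) y else 0) * RT)
            + ((∑' y, K * (if y ∈ T then (R xs) y else 0))
              + ∑' y, (R x) y * (p * RT)) := by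
          rw [ENNReal.tsum_add, ENNReal.tsum_add]
      _ ≤ RT + (K * RT + RT) := by
          gcongr
          · calc (∑' y, (if y ∈ B x then (R x) y else 0) * RT)
                = (R x).toOuterMeasure (B x) * RT := by
                  rw [ENNReal.tsum_mul_right, ← meas_eq_tsum_ite]
              _ ≤ 1 * RT := mul_le_mul_left (meas_le_one _ _) _
              _ = RT := one_mul _
          · calc (∑' y, K * (if y ∈ T then (R xs) y else 0))
                = K * (R xs).toOuterMeasure T := by
                  rw [ENNReal.tsum_mul_left, ← meas_eq_tsum_ite]
              _ ≤ K * RT := le_refl _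
          · calc ∑' y, (R x) y * (p * RT) = p * RT := by
                  rw [ENNReal.tsum_mul_right, PMF.tsum_coe, one_mul]
              _ ≤ 1 * RT := mul_le_mul_left hp _
              _ = RT := one_mul _
      _ = (K + 2) * RT := by ring
  -- lower bound
  have hlow : ∀ x (T : Set 𝒴),
      p * (R xs).toOuterMeasure T ≤ (R' x).toOuterMeasure T := by
    intro x T
    rw [hform]
    calc p * (R xs).toOuterMeasure T
        = ∑' y, (R x) y * (p * (R xs).toOuterMeasure T) := by
          rw [ENNReal.tsum_mul_right, PMF.tsum_coe, one_mul]
      _ ≤ _ := ENNReal.tsum_le_tsum fun y => mul_le_mul_right le_add_self _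
  -- privacy
  have hKp : K + 2 ≤ ENNReal.ofReal (Real.exp (8 * (epsS + Real.log (n:ℝ)))) * p := by
    have hexp8 : Real.exp (8 * (epsS + Real.log (n:ℝ))) = E^8 * (n:ℝ)^8 := by
      rw [mul_add, Real.exp_add]
      congr 1
      · rw [show (8:ℝ) * epsS = (8:ℕ) * epsS by norm_num, Real.exp_nat_mul]
      · rw [show (8:ℝ) * Real.log (n:ℝ) = (8:ℕ) * Real.log (n:ℝ) by norm_num,
          Real.exp_nat_mul, Real.exp_log hnR0]
    have hreal : 2 * ((n:ℝ) * E) + 2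
        ≤ Real.exp (8 * (epsS + Real.log (n:ℝ))) * (beta / (n:ℝ)) := by
      rw [hexp8]
      have h78 : (n:ℝ)^8 * (beta / (n:ℝ)) = (n:ℝ)^7 * beta := by
        field_simp
      have hE8 : ((1:ℝ)/2)^8 ≤ E^8 := by
        apply pow_le_pow_left₀ (by norm_num) hEhalf
      have hn6 : (n:ℝ) ≤ (n:ℝ)^6 := le_self_pow₀ (by linarith) (by norm_num)
      have hnE : (n:ℝ) * E ≤ (n:ℝ) * 3 := mul_le_mul_of_nonneg_left hE3 (le_of_lt hnR0)
      have hs2 : (n:ℝ) * 2048 ≤ (n:ℝ) * ((n:ℝ) * beta) :=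
        mul_le_mul_of_nonneg_left h2048 (le_of_lt hnR0)
      have hs3a : (n:ℝ) * beta ≤ (n:ℝ)^6 * beta :=
        mul_le_mul_of_nonneg_right hn6 (le_of_lt hb0)
      have hs3 : (n:ℝ) * ((n:ℝ) * beta) ≤ (n:ℝ) * ((n:ℝ)^6 * beta) :=
        mul_le_mul_of_nonneg_left hs3a (le_of_lt hnR0)
      calc 2 * ((n:ℝ) * E) + 2 ≤ 8 * (n:ℝ) := by linarith
        _ ≤ (1/256) * ((n:ℝ) * ((n:ℝ) * beta)) := by linarith
        _ ≤ (1/256) * ((n:ℝ) * ((n:ℝ)^6 * beta)) := by linarith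
        _ = ((1/2)^8 : ℝ) * ((n:ℝ)^7 * beta) := by ring
        _ ≤ E^8 * ((n:ℝ)^7 * beta) := by
            have hpos : (0:ℝ) ≤ (n:ℝ)^7 * beta := by positivity
            exact mul_le_mul_of_nonneg_right hE8 hpos
        _ = E^8 * (n:ℝ)^8 * (beta / (n:ℝ)) := by rw [mul_assoc, h78]
    calc K + 2 = ENNReal.ofReal (2 * ((n:ℝ) * E) + 2) := by
          rw [ENNReal.ofReal_add (by positivity) (by norm_num), hKdef]
          norm_num
      _ ≤ ENNReal.ofReal (Real.exp (8 * (epsS + Real.log (n:ℝ))) * (beta / (n:ℝ))) :=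
          ENNReal.ofReal_le_ofReal hreal
      _ = ENNReal.ofReal (Real.exp (8 * (epsS + Real.log (n:ℝ)))) * p := by
          rw [ENNReal.ofReal_mul (le_of_lt (Real.exp_pos _)), hpdef]
  have hpriv : RandDP R' (8 * (epsS + Real.log (n:ℝ))) 0 := by
    intro x x' T
    calc (R' x).toOuterMeasure T ≤ (K + 2) * (R xs).toOuterMeasure T := hup x T
      _ ≤ (ENNReal.ofReal (Real.exp (8 * (epsS + Real.log (n:ℝ)))) * p)
            * (R xs).toOuterMeasure T := mul_le_mul_left hKp _
      _ = ENNReal.ofReal (Real.exp (8 * (epsS + Real.log (n:ℝ))))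
            * (p * (R xs).toOuterMeasure T) := mul_assoc _ _ _
      _ ≤ ENNReal.ofReal (Real.exp (8 * (epsS + Real.log (n:ℝ))))
            * (R' x').toOuterMeasure T := mul_le_mul_right (hlow x' T) _
      _ ≤ ENNReal.ofReal (Real.exp (8 * (epsS + Real.log (n:ℝ))))
            * (R' x').toOuterMeasure T + ENNReal.ofReal 0 := by
          rw [ENNReal.ofReal_zero, add_zero]
  -- closeness
  have hclose : ∀ x (T : Set 𝒴),
      (R x).toOuterMeasure T ≤ (R' x).toOuterMeasure T + (p + 2 * dhat) := by
    intro x T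
    have hsplitT : (R x).toOuterMeasure T
        ≤ (R x).toOuterMeasure (T \ B x) + (R x).toOuterMeasure (B x) := by
      rw [meas_eq_tsum_ite, meas_eq_tsum_ite, meas_eq_tsum_ite, ← ENNReal.tsum_add]
      refine ENNReal.tsum_le_tsum fun y => ?_
      by_cases hy : y ∈ B x
      · by_cases hT : y ∈ T <;> simp [hy, hT, Set.mem_diff]
      · by_cases hT : y ∈ T <;> simp [hy, hT, Set.mem_diff]
    have hlow2 : (1 - p) * (R x).toOuterMeasure (T \ B x) ≤ (R' x).toOuterMeasure T := by
      rw [hform, meas_eq_tsum_ite, ← ENNReal.tsum_mul_left]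
      refine ENNReal.tsum_le_tsum fun y => ?_
      by_cases hyd : y ∈ T \ B x
      · obtain ⟨hyT, hyB⟩ := hyd
        rw [if_pos (show y ∈ T \ B x from ⟨hyT, hyB⟩), if_neg hyB, if_pos hyT]
        calc (1 - p) * (R x) y = (R x) y * ((1 - p) * 1) := by ring
          _ ≤ (R x) y * ((1 - p) * 1 + p * (R xs).toOuterMeasure T) :=
              mul_le_mul_right le_self_add _
      · simp [hyd]
    have hone : (R x).toOuterMeasure (T \ B x)
        ≤ (1 - p) * (R x).toOuterMeasure (T \ B x) + p := by
      set M := (R x).toOuterMeasure (T \ B x) with hM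
      have hM1 : M ≤ 1 := meas_le_one _ _
      calc M = ((1 - p) + p) * M := by rw [tsub_add_cancel_of_le hp, one_mul]
        _ = (1 - p) * M + p * M := add_mul _ _ _
        _ ≤ (1 - p) * M + p := by
            gcongr
            calc p * M ≤ p * 1 := mul_le_mul_right hM1 _
              _ = p := mul_one _
    calc (R x).toOuterMeasure T
        ≤ (R x).toOuterMeasure (T \ B x) + (R x).toOuterMeasure (B x) := hsplitT
      _ ≤ ((1 - p) * (R x).toOuterMeasure (T \ B x) + p) + 2 * dhat :=
          add_le_add hone (hB x)
      _ ≤ ((R' x).toOuterMeasure T + p) + 2 * dhat := by gcongr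
      _ = (R' x).toOuterMeasure T + (p + 2 * dhat) := by ring
  refine ⟨R', A', hpriv, ?_⟩
  intro X
  have hX := hAcc X
  set G : Set 𝒵 := {z | d z (f X) ≤ alpha} with hG
  rw [PMF.toOuterMeasure_map_apply, shuffle1_meas] at hX
  set S : Set (List 𝒴) := {l | (l : Multiset 𝒴) ∈ A ⁻¹' G} with hS
  have hcl := indep_close n (fun i => R (X i)) (fun i => R' (X i)) (p + 2 * dhat)
    (fun i T => hclose (X i) T) S
  have hloc_meas : (localOut n R' A' X).toOuterMeasure G
      = (indep n fun i => R' (X i)).toOuterMeasure S := by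
    unfold localOut
    rw [PMF.toOuterMeasure_map_apply]
    rfl
  have hdhat_le : dhat ≤ ENNReal.ofReal (((n:ℝ)^8)⁻¹) := ENNReal.ofReal_le_ofReal hdel'
  have hq : (n : ℝ≥0∞) * (p + 2 * dhat) ≤ ENNReal.ofReal (3 * beta) := by
    have h1 : (n : ℝ≥0∞) * p = ENNReal.ofReal beta := by
      rw [hpdef, ← ENNReal.ofReal_natCast n, ← ENNReal.ofReal_mul (by positivity),
        mul_div_cancel₀ beta hnR0.ne']
    have h2 : (n : ℝ≥0∞) * (2 * dhat) ≤ ENNReal.ofReal (2 * beta) := by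
      calc (n : ℝ≥0∞) * (2 * dhat)
          ≤ (n : ℝ≥0∞) * (2 * ENNReal.ofReal (((n:ℝ)^8)⁻¹)) := by gcongr
        _ = ENNReal.ofReal ((n:ℝ) * (2 * ((n:ℝ)^8)⁻¹)) := by
            rw [ENNReal.ofReal_mul (le_of_lt hnR0), ENNReal.ofReal_mul (by norm_num),
              ENNReal.ofReal_natCast]
            norm_num
        _ ≤ ENNReal.ofReal (2 * beta) := by
            apply ENNReal.ofReal_le_ofReal
            have hn8 : (n:ℝ) * (n:ℝ) ≤ (n:ℝ)^8 := by
              calc (n:ℝ) * (n:ℝ) = (n:ℝ)^2 := by ring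
                _ ≤ (n:ℝ)^8 := pow_le_pow_right₀ (by linarith) (by norm_num)
            have hkey : (n:ℝ) * ((n:ℝ)^8)⁻¹ ≤ beta := by
              rw [← div_eq_mul_inv, div_le_iff₀ (by positivity)]
              have a1 : beta * ((n:ℝ) * (n:ℝ)) ≤ beta * (n:ℝ)^8 :=
                mul_le_mul_of_nonneg_left hn8 (le_of_lt hb0)
              have a2 : (2048:ℝ) * (n:ℝ) ≤ ((n:ℝ) * beta) * (n:ℝ) :=
                mul_le_mul_of_nonneg_right h2048 (le_of_lt hnR0)
              have a3 : beta * ((n:ℝ) * (n:ℝ)) = ((n:ℝ) * beta) * (n:ℝ) := by ring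
              linarith [hnR0.le]
            calc (n:ℝ) * (2 * ((n:ℝ)^8)⁻¹) = 2 * ((n:ℝ) * ((n:ℝ)^8)⁻¹) := by ring
              _ ≤ 2 * beta := by linarith
    calc (n : ℝ≥0∞) * (p + 2 * dhat) = (n : ℝ≥0∞) * p + (n : ℝ≥0∞) * (2 * dhat) :=
          mul_add _ _ _
      _ ≤ ENNReal.ofReal beta + ENNReal.ofReal (2 * beta) := add_le_add h1.le h2
      _ = ENNReal.ofReal (3 * beta) := by
          rw [← ENNReal.ofReal_add (by positivity) (by positivity)]
          congr 1
          ring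
  rw [hloc_meas]
  by_cases hb4 : 1 - 4 * beta ≤ 0
  · rw [ENNReal.ofReal_of_nonpos hb4]
    exact zero_le
  · push_neg at hb4
    have e1 : ENNReal.ofReal (1 - beta)
        = ENNReal.ofReal (1 - 4 * beta) + ENNReal.ofReal (3 * beta) := by
      rw [← ENNReal.ofReal_add (by linarith) (by positivity)]
      ring_nf
    have hchain : ENNReal.ofReal (1 - 4 * beta) + ENNReal.ofReal (3 * beta)
        ≤ (indep n fun i => R' (X i)).toOuterMeasure S + ENNReal.ofReal (3 * beta) := by
      calc ENNReal.ofReal (1 - 4 * beta) + ENNReal.ofReal (3 * beta)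
          = ENNReal.ofReal (1 - beta) := e1.symm
        _ ≤ (indep n fun i => R (X i)).toOuterMeasure S := hX
        _ ≤ (indep n fun i => R' (X i)).toOuterMeasure S + (n : ℝ≥0∞) * (p + 2 * dhat) := hcl
        _ ≤ (indep n fun i => R' (X i)).toOuterMeasure S + ENNReal.ofReal (3 * beta) := by
            gcongr
    exact (ENNReal.add_le_add_iff_right ENNReal.ofReal_ne_top).mp hchain


end ShuffledDP
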